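/- Let A be a finite-dimensional commutative local ℂ-algebra with maximal ideal m and residue field ℂ, regarded as a normed ℂ-algebra, and let f : [0,1] → Aˣ be a C¹ loop, i.e. f(0) = f(1). Then there exists an integer n such that ∫_0^1 f'(t)·f(t)⁻¹ dt = 2πi·n. -/

import Mathlib

open MeasureTheory intervalIntegral

open NormedSpace in
/-- If `m` is nilpotent in a commutative Banach `ℂ`-algebra, then
`exp m = 1 + m * (1 + m * v)` for some `v`. -/
lemma aux_exp_decomp {A : Type*} [NormedCommRing A] [NormedAlgebra ℂ A]
    [CompleteSpace A] {m : A} (hm : IsNilpotent m) :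
    ∃ v : A, exp m = 1 + m * (1 + m * v) := by
  obtain ⟨k, hk⟩ := hm
  refine ⟨∑ j ∈ Finset.range k, (((j + 2).factorial : ℂ))⁻¹ • m ^ j, ?_⟩
  have hsum : exp m = ∑ j ∈ Finset.range (k + 2), ((j.factorial : ℂ))⁻¹ • m ^ j := by
    rw [exp_eq_tsum ℂ]
    refine tsum_eq_sum (fun j hj => ?_)
    have hj' : k ≤ j := by
      simp only [Finset.mem_range, not_lt] at hj; omega
    rw [pow_eq_zero_of_le hj' hk, smul_zero]
  rw [hsum, Finset.sum_range_succ' _ (k + 1), Finset.sum_range_succ' _ k]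
  have h1 : ∑ j ∈ Finset.range k, (((j + 1 + 1).factorial : ℂ))⁻¹ • m ^ (j + 1 + 1)
      = m * (m * ∑ j ∈ Finset.range k, (((j + 2).factorial : ℂ))⁻¹ • m ^ j) := by
    rw [Finset.mul_sum, Finset.mul_sum]
    refine Finset.sum_congr rfl fun j _ => ?_
    rw [mul_smul_comm, mul_smul_comm, ← mul_assoc]
    congr 2
    ring
  rw [h1]
  simp only [zero_add, Nat.factorial_zero, Nat.factorial_one, Nat.cast_one, inv_one, one_smul,
    pow_zero, pow_one]
  ring

open NormedSpace in
/-- If `m` is nilpotent and `exp m = 1`, then `m = 0`. -/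
lemma aux_exp_nilpotent_eq_one {A : Type*} [NormedCommRing A] [NormedAlgebra ℂ A]
    [CompleteSpace A] {m : A} (hm : IsNilpotent m) (h : exp m = 1) : m = 0 := by
  obtain ⟨v, hv⟩ := aux_exp_decomp hm
  rw [h] at hv
  have hmul : m * (1 + m * v) = 0 := by linear_combination -hv
  have hu : IsUnit (1 + m * v) := ((Commute.all m v).isNilpotent_mul_right hm).isUnit_one_add
  have := hu.mul_left_cancel (a := 1 + m * v) (b := m) (c := 0)
    (by rw [mul_comm, hmul, mul_zero])
  exact this

open NormedSpace in
/-- In a finite-dimensional local commutative normed `ℂ`-algebra with residue field `ℂ`,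
`exp x = 1` implies `x = 2πi n` for some integer `n`. -/
lemma aux_exp_eq_one {A : Type*} [NormedCommRing A] [NormedAlgebra ℂ A]
    [FiniteDimensional ℂ A] [IsLocalRing A]
    (hres : Function.Bijective ((IsLocalRing.residue A).comp (algebraMap ℂ A)))
    {x : A} (h : exp x = 1) :
    ∃ n : ℤ, x = algebraMap ℂ A ((n : ℂ) * (2 * Real.pi * Complex.I)) := by
  haveI : CompleteSpace A := FiniteDimensional.complete ℂ A
  letI : NormedAlgebra ℚ A := NormedAlgebra.restrictScalars ℚ ℂ A
  haveI : IsArtinianRing A := isArtinian_of_tower ℂ inferInstance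
  -- the maximal ideal is nilpotent
  have hmax : IsNilpotent (IsLocalRing.maximalIdeal A) := by
    rw [← IsLocalRing.jacobson_eq_maximalIdeal (⊥ : Ideal A) bot_ne_top]
    exact IsArtinianRing.isNilpotent_jacobson_bot
  have hnil : ∀ y ∈ IsLocalRing.maximalIdeal A, IsNilpotent y := by
    intro y hy
    obtain ⟨N, hN⟩ := hmax
    refine ⟨N, ?_⟩
    have := Ideal.pow_mem_pow hy N
    rw [hN] at this
    simpa using this
  set φ := (IsLocalRing.residue A).comp (algebraMap ℂ A) with hφ
  set e : ℂ ≃+* IsLocalRing.ResidueField A := RingEquiv.ofBijective φ hres with he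
  set c : ℂ := e.symm (IsLocalRing.residue A x) with hc
  have hφc : φ c = IsLocalRing.residue A x := e.apply_symm_apply _
  set y : A := x - algebraMap ℂ A c with hy
  have hymem : y ∈ IsLocalRing.maximalIdeal A := by
    rw [← Ideal.Quotient.eq_zero_iff_mem]
    show IsLocalRing.residue A y = 0
    rw [hy, map_sub, ← hφc]
    simp [hφ]
  have hynil : IsNilpotent y := hnil y hymem
  have hxsplit : x = algebraMap ℂ A c + y := by rw [hy]; ring
  have hexp : exp x = algebraMap ℂ A (Complex.exp c) * exp y := by
    rw [hxsplit, exp_add, Complex.exp_eq_exp_ℂ, algebraMap_exp_comm]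
  obtain ⟨v, hv⟩ := aux_exp_decomp hynil
  have hyu : y * (1 + y * v) ∈ IsLocalRing.maximalIdeal A :=
    Ideal.mul_mem_right _ _ hymem
  -- apply the residue map to `exp x = 1`
  have hres1 : φ (Complex.exp c) = 1 := by
    have happ := congrArg (IsLocalRing.residue A) (hexp.symm.trans h)
    rw [map_mul, hv, map_add, map_one] at happ
    have hz : IsLocalRing.residue A (y * (1 + y * v)) = 0 :=
      (Ideal.Quotient.eq_zero_iff_mem).2 hyu
    rw [hz, add_zero, mul_one] at happ
    simpa [hφ] using happ
  have hexpc : Complex.exp c = 1 := by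
    apply hres.injective
    rw [hres1, map_one]
  obtain ⟨n, hn⟩ := Complex.exp_eq_one_iff.mp hexpc
  -- now `exp y = 1`, hence `y = 0`
  have hexpy : exp y = 1 := by
    rw [hexp, hexpc, map_one, one_mul] at h
    exact h
  have hy0 : y = 0 := aux_exp_nilpotent_eq_one hynil hexpy
  exact ⟨n, by rw [hxsplit, hy0, add_zero, hn]⟩

/-- Let `A` be a finite-dimensional commutative local `ℂ`-algebra (normed `ℂ`-algebra)
with residue field `ℂ`, and let `f : [0,1] → Aˣ` be a C¹ loop (`f 0 = f 1`) into the
units of `A`.  Then `∫_0^1 f'(t) f(t)⁻¹ dt = 2πi n` for some integer `n`. -/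
theorem integral_logDeriv_loop_eq_two_pi_I_int
    (A : Type*) [NormedCommRing A] [NormedAlgebra ℂ A] [FiniteDimensional ℂ A]
    [IsLocalRing A]
    (hres : Function.Bijective ((IsLocalRing.residue A).comp (algebraMap ℂ A)))
    (f f' : ℝ → A)
    (hf : ∀ t ∈ Set.Icc (0 : ℝ) 1, IsUnit (f t))
    (hf' : ContinuousOn f' (Set.Icc 0 1))
    (hderiv : ∀ t ∈ Set.Icc (0 : ℝ) 1, HasDerivWithinAt f (f' t) (Set.Icc 0 1) t)
    (hloop : f 0 = f 1) :
    ∃ n : ℤ, (∫ t in (0 : ℝ)..1, f' t * Ring.inverse (f t)) =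
      algebraMap ℂ A (2 * Real.pi * Complex.I * (n : ℂ)) := by
  haveI : CompleteSpace A := FiniteDimensional.complete ℂ A
  letI : NormedAlgebra ℚ A := NormedAlgebra.restrictScalars ℚ ℂ A
  set g : ℝ → A := fun t => f' t * Ring.inverse (f t) with hg
  set pr : ℝ → ℝ := fun t => max 0 (min 1 t) with hpr
  have hpr_mem : ∀ t, pr t ∈ Set.Icc (0 : ℝ) 1 := fun t =>
    ⟨le_max_left _ _, max_le zero_le_one (min_le_left _ _)⟩
  have hpr_cont : Continuous pr := continuous_const.max (continuous_const.min continuous_id)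
  have hpr_id : ∀ t ∈ Set.Icc (0 : ℝ) 1, pr t = t := fun t ht => by
    simp only [hpr, min_eq_right ht.2, max_eq_right ht.1]
  have hfc : ContinuousOn f (Set.Icc 0 1) := fun t ht => (hderiv t ht).continuousWithinAt
  have hinv : ContinuousOn (fun t => Ring.inverse (f t)) (Set.Icc 0 1) := by
    intro t ht
    have h1 : ContinuousAt Ring.inverse (f t) := by
      have := NormedRing.inverse_continuousAt (hf t ht).unit
      rwa [(hf t ht).unit_spec] at this
    exact h1.comp_continuousWithinAt (hfc t ht)
  have hgc : ContinuousOn g (Set.Icc 0 1) := hf'.mul hinv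
  set G : ℝ → A := fun t => g (pr t) with hG
  have hGc : Continuous G := hgc.comp_continuous hpr_cont hpr_mem
  set F : ℝ → A := fun t => ∫ s in (0 : ℝ)..t, G s with hF
  have hFd : ∀ t, HasDerivAt F (G t) t := fun t =>
    integral_hasDerivAt_right (hGc.intervalIntegrable _ _)
      hGc.aestronglyMeasurable.stronglyMeasurableAtFilter hGc.continuousAt
  set h : ℝ → A := fun t => NormedSpace.exp (-(F t)) * f t with hh
  have hexpd : ∀ t, HasDerivAt (fun s => NormedSpace.exp (-(F s)))
      (NormedSpace.exp (-(F t)) * (-(G t))) t := by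
    intro t
    have h1 : HasDerivAt (fun s => -(F s)) (-(G t)) t := (hFd t).neg
    have h2 := ((hasFDerivAt_exp (𝕂 := ℂ) (x := -(F t))).restrictScalars ℝ).comp_hasDerivAt t h1
    simpa [smul_eq_mul, Function.comp_def] using h2
  have hhd : ∀ t ∈ Set.Icc (0 : ℝ) 1, HasDerivWithinAt h 0 (Set.Icc 0 1) t := by
    intro t ht
    have h3 := ((hexpd t).hasDerivWithinAt).mul (hderiv t ht)
    have hGt : G t * f t = f' t := by
      rw [hG]
      simp only [hpr_id t ht]
      rw [hg, mul_assoc, Ring.inverse_mul_cancel _ (hf t ht), mul_one]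
    have heq : NormedSpace.exp (-(F t)) * -(G t) * f t
        + NormedSpace.exp (-(F t)) * f' t = 0 := by
      have : NormedSpace.exp (-(F t)) * -(G t) * f t
          + NormedSpace.exp (-(F t)) * f' t
          = NormedSpace.exp (-(F t)) * (f' t - G t * f t) := by ring
      rw [this, hGt, sub_self, mul_zero]
    rwa [heq] at h3
  have hFc : Continuous F := by
    rw [continuous_iff_continuousAt]
    exact fun t => (hFd t).continuousAt
  have hhc : ContinuousOn h (Set.Icc 0 1) :=
    ((NormedSpace.exp_continuous.comp hFc.neg).continuousOn).mul hfc
  have hconst := constant_of_has_deriv_right_zero hhc (fun x hx =>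
    (hhd x (Set.Ico_subset_Icc_self hx)).mono_of_mem_nhdsWithin (Icc_mem_nhdsGE_of_mem hx))
  have h10 : h 1 = h 0 := hconst 1 (Set.right_mem_Icc.2 zero_le_one)
  have hF0 : F 0 = 0 := intervalIntegral.integral_same
  have h0 : h 0 = f 0 := by
    rw [hh]
    simp [hF0]
  have hkey : NormedSpace.exp (-(F 1)) * f 1 = 1 * f 1 := by
    calc NormedSpace.exp (-(F 1)) * f 1 = h 1 := rfl
      _ = h 0 := h10
      _ = f 0 := h0
      _ = 1 * f 1 := by rw [one_mul, hloop]
  have hexp1 : NormedSpace.exp (-(F 1)) = 1 :=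
    (hf 1 (Set.right_mem_Icc.2 zero_le_one)).mul_right_cancel hkey
  obtain ⟨n, hn⟩ := aux_exp_eq_one hres hexp1
  refine ⟨-n, ?_⟩
  have hint : (∫ t in (0 : ℝ)..1, f' t * Ring.inverse (f t)) = F 1 := by
    rw [hF]
    refine (intervalIntegral.integral_congr ?_).symm
    intro t ht
    rw [Set.uIcc_of_le zero_le_one] at ht
    simp only [hG, hpr_id t ht, hg]
  rw [hint]
  have : F 1 = algebraMap ℂ A (-((n : ℂ) * (2 * Real.pi * Complex.I))) := by
    rw [map_neg, ← hn, neg_neg]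
  rw [this]
  congr 1
  push_cast
  ring
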